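/- There exists t1' ∈ (t0,t1) such that R(t0,τ) = R(t0,t1) for every τ ∈ (t1', t1]; i.e., the reachable set stabilizes before the final time. (Proposition 3.2 (iii).) -/

import Mathlib

open MeasureTheory Set

noncomputable section

/-- A control: a measurable, essentially bounded map `ℝ → ℝ^k`. -/
def IsControl (k : ℕ) (u : ℝ → Fin k → ℝ) : Prop :=
  Measurable u ∧ ∃ C : ℝ, ∀ᵐ t : ℝ, ‖u t‖ ≤ C

/-- The endpoint map `E_a(τ, Δu) = ∫_a^τ A(t) · Δu(t) dt`. -/
def epMap (k m : ℕ) (A : ℝ → Matrix (Fin m) (Fin k) ℝ) (a τ : ℝ)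
    (u : ℝ → Fin k → ℝ) : Fin m → ℝ :=
  ∫ t in a..τ, (A t).mulVec (u t)

/-- The reachable set `R(a,τ)` of the characteristic linear control system. -/
def reach (k m : ℕ) (A : ℝ → Matrix (Fin m) (Fin k) ℝ) (a τ : ℝ) :
    Set (Fin m → ℝ) :=
  { v | ∃ u, IsControl k u ∧ epMap k m A a τ u = v }

section Aux

variable {t0 t1 : ℝ} {k m : ℕ} {A : ℝ → Matrix (Fin m) (Fin k) ℝ} {C : ℝ}

/-- Measurability of the integrand. -/
lemma integrand_meas (hAmeas : ∀ i j, Measurable fun t => A t i j)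
    {u : ℝ → Fin k → ℝ} (hu : Measurable u) :
    Measurable fun t => (A t).mulVec (u t) := by
  apply measurable_pi_lambda
  intro i
  simp only [Matrix.mulVec, dotProduct]
  exact Finset.measurable_sum _ fun j _ =>
    (hAmeas i j).mul (measurable_pi_apply j |>.comp hu)

/-- A.e. bound of the integrand on `Icc t0 t1`. -/
lemma integrand_bound (hA : ∀ t ∈ Set.Icc t0 t1, ∀ i j, |A t i j| ≤ C)
    {u : ℝ → Fin k → ℝ} {Cu : ℝ} (hCu : 0 ≤ Cu) (hC : 0 ≤ C)
    (hub : ∀ᵐ t : ℝ, ‖u t‖ ≤ Cu) :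
    ∀ᵐ t : ℝ, t ∈ Set.Icc t0 t1 → ‖(A t).mulVec (u t)‖ ≤ k * C * Cu := by
  filter_upwards [hub] with t htu htI
  rw [pi_norm_le_iff_of_nonneg (by positivity)]
  intro i
  have : ‖(A t).mulVec (u t) i‖ = |∑ j, A t i j * u t j| := by
    simp [Matrix.mulVec, dotProduct, Real.norm_eq_abs]
  rw [Real.norm_eq_abs] at *
  calc |(A t).mulVec (u t) i| ≤ ∑ j, |A t i j * u t j| := by
        simp only [Matrix.mulVec, dotProduct]
        exact Finset.abs_sum_le_sum_abs _ _
    _ ≤ ∑ _j : Fin k, C * Cu := by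
        refine Finset.sum_le_sum fun j _ => ?_
        rw [abs_mul]
        have h1 : |u t j| ≤ Cu := le_trans (by simpa using norm_le_pi_norm (u t) j) htu
        exact mul_le_mul (hA t htI i j) h1 (abs_nonneg _) hC
    _ = k * C * Cu := by simp [mul_assoc]

/-- Interval integrability on subintervals of `[t0,t1]`. -/
lemma integrand_intInt (hAmeas : ∀ i j, Measurable fun t => A t i j)
    (hA : ∀ t ∈ Set.Icc t0 t1, ∀ i j, |A t i j| ≤ C) (hC : 0 ≤ C)
    {u : ℝ → Fin k → ℝ} (hu : Measurable u) {Cu : ℝ} (hCu : 0 ≤ Cu)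
    (hub : ∀ᵐ t : ℝ, ‖u t‖ ≤ Cu) {a b : ℝ}
    (ha : a ∈ Set.Icc t0 t1) (hb : b ∈ Set.Icc t0 t1) :
    IntervalIntegrable (fun t => (A t).mulVec (u t)) volume a b := by
  rw [intervalIntegrable_iff]
  have hsub : Set.uIoc a b ⊆ Set.Icc t0 t1 := by
    intro t htI
    exact ⟨le_trans (le_min ha.1 hb.1) (le_of_lt htI.1),
      le_trans htI.2 (max_le ha.2 hb.2)⟩
  have : IsFiniteMeasure (volume.restrict (Set.uIoc a b)) := by
    constructor
    rw [Measure.restrict_apply_univ]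
    exact measure_Ioc_lt_top
  refine Integrable.mono' (integrable_const (k * C * Cu))
    ((integrand_meas hAmeas hu).aestronglyMeasurable) ?_
  refine (ae_restrict_iff' measurableSet_uIoc).2 ?_
  filter_upwards [integrand_bound hA hCu hC hub] with t h ht
  exact h (hsub ht)

end Aux
section Aux2

variable {t0 t1 : ℝ} {k m : ℕ} {A : ℝ → Matrix (Fin m) (Fin k) ℝ} {C : ℝ}

lemma isControl_zero : IsControl k (0 : ℝ → Fin k → ℝ) :=
  ⟨measurable_const, 0, Filter.Eventually.of_forall fun t => by simp⟩

lemma isControl_add {u v : ℝ → Fin k → ℝ} (hu : IsControl k u) (hv : IsControl k v) :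
    IsControl k (u + v) := by
  obtain ⟨hum, Cu, hub⟩ := hu
  obtain ⟨hvm, Cv, hvb⟩ := hv
  refine ⟨hum.add hvm, Cu + Cv, ?_⟩
  filter_upwards [hub, hvb] with t h1 h2
  exact (norm_add_le _ _).trans (add_le_add h1 h2)

lemma isControl_smul (c : ℝ) {u : ℝ → Fin k → ℝ} (hu : IsControl k u) :
    IsControl k (c • u) := by
  obtain ⟨hum, Cu, hub⟩ := hu
  refine ⟨hum.const_smul c, |c| * Cu, ?_⟩
  filter_upwards [hub] with t h1
  rw [Pi.smul_apply, norm_smul, Real.norm_eq_abs]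
  exact mul_le_mul_of_nonneg_left h1 (abs_nonneg _)

/-- Splitting the endpoint map at an intermediate time. -/
lemma epMap_split (hAmeas : ∀ i j, Measurable fun t => A t i j)
    (hA : ∀ t ∈ Set.Icc t0 t1, ∀ i j, |A t i j| ≤ C) (hC : 0 ≤ C)
    {u : ℝ → Fin k → ℝ} (hu : Measurable u) {Cu : ℝ} (hCu : 0 ≤ Cu)
    (hub : ∀ᵐ t : ℝ, ‖u t‖ ≤ Cu) {b c : ℝ}
    (ht0 : t0 ∈ Set.Icc t0 t1) (hb : b ∈ Set.Icc t0 t1) (hc : c ∈ Set.Icc t0 t1) :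
    epMap k m A t0 c u = epMap k m A t0 b u + ∫ t in b..c, (A t).mulVec (u t) := by
  unfold epMap
  rw [← intervalIntegral.integral_add_adjacent_intervals
    (integrand_intInt hAmeas hA hC hu hCu hub ht0 hb)
    (integrand_intInt hAmeas hA hC hu hCu hub hb hc)]

/-- Monotonicity of the reachable set. -/
lemma reach_mono (hAmeas : ∀ i j, Measurable fun t => A t i j)
    (hA : ∀ t ∈ Set.Icc t0 t1, ∀ i j, |A t i j| ≤ C) (hC : 0 ≤ C)
    {b c : ℝ} (hb : b ∈ Set.Icc t0 t1) (hc : c ∈ Set.Icc t0 t1) (hbc : b ≤ c) :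
    reach k m A t0 b ⊆ reach k m A t0 c := by
  rintro v ⟨u, ⟨hum, Cu, hub⟩, rfl⟩
  set Cu' := max Cu 0 with hCu'
  have hub' : ∀ᵐ t : ℝ, ‖u t‖ ≤ Cu' := by
    filter_upwards [hub] with t h; exact h.trans (le_max_left _ _)
  have hCu'0 : (0:ℝ) ≤ Cu' := le_max_right _ _
  set u' : ℝ → Fin k → ℝ := fun t => if t ≤ b then u t else 0 with hu'def
  have hu'm : Measurable u' := Measurable.ite measurableSet_Iic hum measurable_const
  have hu'b : ∀ᵐ t : ℝ, ‖u' t‖ ≤ Cu' := by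
    filter_upwards [hub'] with t h
    by_cases htb : t ≤ b <;> simp [hu'def, htb, h, hCu'0]
  refine ⟨u', ⟨hu'm, Cu', hu'b⟩, ?_⟩
  have ht0 : t0 ∈ Set.Icc t0 t1 := ⟨le_refl _, hb.1.trans hb.2⟩
  have key := epMap_split hAmeas hA hC hu'm hCu'0 hu'b ht0 hb hc
  have h2 : (∫ t in b..c, (A t).mulVec (u' t)) = 0 := by
    rw [intervalIntegral.integral_of_le hbc]
    rw [MeasureTheory.setIntegral_congr_fun measurableSet_Ioc
      (g := fun _ => (0 : Fin m → ℝ)) ?_]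
    · simp
    · intro t ht
      have : ¬ t ≤ b := not_le.2 ht.1
      simp [hu'def, this]
  have h3 : epMap k m A t0 b u' = epMap k m A t0 b u := by
    unfold epMap
    rw [intervalIntegral.integral_of_le hb.1, intervalIntegral.integral_of_le hb.1]
    apply MeasureTheory.setIntegral_congr_fun measurableSet_Ioc
    intro t ht
    simp [hu'def, ht.2]
  rw [key, h2, h3, add_zero]

end Aux2
section Aux3

variable {t0 t1 : ℝ} {k m : ℕ} {A : ℝ → Matrix (Fin m) (Fin k) ℝ} {C : ℝ}

/-- The reachable set is a linear subspace. -/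
lemma reach_submodule (hAmeas : ∀ i j, Measurable fun t => A t i j)
    (hA : ∀ t ∈ Set.Icc t0 t1, ∀ i j, |A t i j| ≤ C) (hC : 0 ≤ C)
    {τ : ℝ} (hτ : τ ∈ Set.Icc t0 t1) :
    ∃ S : Submodule ℝ (Fin m → ℝ), (S : Set (Fin m → ℝ)) = reach k m A t0 τ := by
  have ht0 : t0 ∈ Set.Icc t0 t1 := ⟨le_refl _, hτ.1.trans hτ.2⟩
  refine ⟨⟨⟨⟨reach k m A t0 τ, ?_⟩, ?_⟩, ?_⟩, rfl⟩
  · intro v w hv hw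
    obtain ⟨u1, hc1, rfl⟩ := hv
    obtain ⟨u2, hc2, rfl⟩ := hw
    refine ⟨u1 + u2, isControl_add hc1 hc2, ?_⟩
    obtain ⟨hm1, C1, hb1⟩ := hc1
    obtain ⟨hm2, C2, hb2⟩ := hc2
    have hb1' : ∀ᵐ t : ℝ, ‖u1 t‖ ≤ max C1 0 := by
      filter_upwards [hb1] with t h; exact h.trans (le_max_left _ _)
    have hb2' : ∀ᵐ t : ℝ, ‖u2 t‖ ≤ max C2 0 := by
      filter_upwards [hb2] with t h; exact h.trans (le_max_left _ _)
    unfold epMap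
    rw [← intervalIntegral.integral_add
      (integrand_intInt hAmeas hA hC hm1 (le_max_right _ _) hb1' ht0 hτ)
      (integrand_intInt hAmeas hA hC hm2 (le_max_right _ _) hb2' ht0 hτ)]
    congr 1
    ext t
    simp [Matrix.mulVec_add]
  · exact ⟨0, isControl_zero, by simp [epMap]⟩
  · intro c v hv
    obtain ⟨u, hc1, rfl⟩ := hv
    refine ⟨c • u, isControl_smul c hc1, ?_⟩
    unfold epMap
    rw [← intervalIntegral.integral_smul]
    congr 1
    ext t
    simp [Matrix.mulVec_smul]

end Aux3


/-- **Proposition 3.2 (iii).** There exists `t1' ∈ (t0,t1)` such that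
`R(t0,τ) = R(t0,t1)` for every `τ ∈ (t1',t1]`: the reachable set stabilizes
before the final time. -/
theorem reach_stabilizes
    (t0 t1 : ℝ) (ht : t0 < t1) (k m : ℕ)
    (A : ℝ → Matrix (Fin m) (Fin k) ℝ)
    (hAmeas : ∀ i j, Measurable fun t => A t i j)
    (hAbdd : ∃ C : ℝ, ∀ t ∈ Set.Icc t0 t1, ∀ i j, |A t i j| ≤ C) :
    ∃ t1' ∈ Set.Ioo t0 t1, ∀ τ ∈ Set.Ioc t1' t1,
      reach k m A t0 τ = reach k m A t0 t1 := by
  classical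
  obtain ⟨CA, hCA⟩ := hAbdd
  set C : ℝ := max CA 0 with hCdef
  have hC : (0:ℝ) ≤ C := le_max_right _ _
  have hA : ∀ t ∈ Set.Icc t0 t1, ∀ i j, |A t i j| ≤ C :=
    fun t htI i j => (hCA t htI i j).trans (le_max_left _ _)
  set d : ℝ := t1 - t0 with hddef
  have hd : 0 < d := sub_pos.2 ht
  set τs : ℕ → ℝ := fun n => t1 - d / ((n:ℝ) + 2) with hτsdef
  have hn2 : ∀ n : ℕ, (0:ℝ) < (n:ℝ) + 2 := fun n => by positivity
  have hτmem : ∀ n, τs n ∈ Set.Ioo t0 t1 := by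
    intro n
    constructor
    · have : d / ((n:ℝ) + 2) < d := div_lt_self hd (by have h0 : (0:ℝ) ≤ (n:ℝ) := Nat.cast_nonneg n; linarith)
      simp only [hτsdef, hddef] at this ⊢
      linarith
    · have : 0 < d / ((n:ℝ) + 2) := div_pos hd (hn2 n)
      simp only [hτsdef]; linarith
  have hτIcc : ∀ n, τs n ∈ Set.Icc t0 t1 :=
    fun n => ⟨(hτmem n).1.le, (hτmem n).2.le⟩
  have ht1Icc : t1 ∈ Set.Icc t0 t1 := ⟨ht.le, le_refl _⟩
  have hτmono : Monotone τs := by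
    intro i j hij
    have hcast : (i:ℝ) + 2 ≤ (j:ℝ) + 2 := by
      have : (i:ℝ) ≤ (j:ℝ) := Nat.cast_le.2 hij
      linarith
    have : d / ((j:ℝ) + 2) ≤ d / ((i:ℝ) + 2) :=
      div_le_div_of_nonneg_left hd.le (hn2 i) hcast
    simp only [hτsdef]; linarith
  choose S hS using fun n => reach_submodule (hAmeas := hAmeas) hA hC (hτIcc n)
  have hSmono : ∀ {i j : ℕ}, i ≤ j → S i ≤ S j := by
    intro i j hij
    have := reach_mono hAmeas hA hC (hτIcc i) (hτIcc j) (hτmono hij)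
    intro x hx
    have : x ∈ reach k m A t0 (τs j) := this (by rw [← hS i]; exact hx)
    rwa [← hS j] at this
  -- eventual stabilization of the dimensions
  set D : ℕ → ℕ := fun n => Module.finrank ℝ (S n) with hDdef
  have hbdd : BddAbove (Set.range D) := by
    refine ⟨Module.finrank ℝ (Fin m → ℝ), ?_⟩
    rintro x ⟨n, rfl⟩
    exact Submodule.finrank_le (S n)
  obtain ⟨N, hN⟩ : ∃ N, sSup (Set.range D) = D N := by
    have := Nat.sSup_mem (Set.range_nonempty D) hbdd
    obtain ⟨N, hN⟩ := this
    exact ⟨N, hN.symm⟩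
  have hDN : ∀ n, D n ≤ D N := by
    intro n
    rw [← hN]
    exact le_csSup hbdd ⟨n, rfl⟩
  have hSeq : ∀ n, N ≤ n → S n = S N :=
    fun n hn => (Submodule.eq_of_le_of_finrank_le (hSmono hn) (hDN n)).symm
  -- claim 1: the final reachable set is `S N`
  have claim2 : reach k m A t0 t1 = (S N : Set (Fin m → ℝ)) := by
    apply Set.Subset.antisymm
    · rintro v ⟨u, ⟨hum, Cu, hub⟩, rfl⟩
      set Cu' : ℝ := max Cu 0 with hCu'def
      have hCu'0 : (0:ℝ) ≤ Cu' := le_max_right _ _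
      have hub' : ∀ᵐ t : ℝ, ‖u t‖ ≤ Cu' := by
        filter_upwards [hub] with t h; exact h.trans (le_max_left _ _)
      set B : ℝ := (k:ℝ) * C * Cu' with hBdef
      have hB : 0 ≤ B := by positivity
      have hmem : ∀ n, N ≤ n → epMap k m A t0 (τs n) u ∈ (S N : Set (Fin m → ℝ)) := by
        intro n hn
        rw [← hSeq n hn, hS n]
        exact ⟨u, ⟨hum, Cu, hub⟩, rfl⟩
      have htail : ∀ n, ‖epMap k m A t0 (τs n) u - epMap k m A t0 t1 u‖ ≤ B * (d / ((n:ℝ)+2)) := by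
        intro n
        have hsplit := epMap_split hAmeas hA hC hum hCu'0 hub'
          ⟨le_refl _, ht.le⟩ (hτIcc n) ht1Icc
        have : epMap k m A t0 (τs n) u - epMap k m A t0 t1 u
            = - ∫ t in (τs n)..t1, (A t).mulVec (u t) := by
          rw [hsplit]; abel
        rw [this, norm_neg]
        have hbnd : ∀ᵐ x : ℝ, x ∈ Set.uIoc (τs n) t1 → ‖(A x).mulVec (u x)‖ ≤ B := by
          filter_upwards [integrand_bound hA hCu'0 hC hub'] with x hx hxI
          apply hx
          rw [Set.uIoc_of_le (hτmem n).2.le] at hxI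
          exact ⟨(hτmem n).1.le.trans hxI.1.le, hxI.2⟩
        have := intervalIntegral.norm_integral_le_of_norm_le_const_ae hbnd
        have habs : |t1 - τs n| = d / ((n:ℝ)+2) := by
          rw [abs_of_nonneg (by linarith [(hτmem n).2])]
          simp only [hτsdef]; ring
        rwa [habs] at this
      have hlim : Filter.Tendsto (fun n => epMap k m A t0 (τs n) u) Filter.atTop
          (nhds (epMap k m A t0 t1 u)) := by
        rw [tendsto_iff_norm_sub_tendsto_zero]
        apply squeeze_zero (fun n => norm_nonneg _) htail
        have h1 : Filter.Tendsto (fun n : ℕ => ((n:ℝ) + 2)) Filter.atTop Filter.atTop :=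
          Filter.tendsto_atTop_add_const_right _ 2 tendsto_natCast_atTop_atTop
        have h2 : Filter.Tendsto (fun n : ℕ => (B * d) / ((n:ℝ) + 2)) Filter.atTop (nhds 0) :=
          Filter.Tendsto.div_atTop tendsto_const_nhds h1
        convert h2 using 2 with n
        ring
      exact (S N).closed_of_finiteDimensional.mem_of_tendsto hlim
        (Filter.eventually_atTop.2 ⟨N, hmem⟩)
    · rw [hS N]
      exact reach_mono hAmeas hA hC (hτIcc N) ht1Icc (hτmem N).2.le
  refine ⟨τs N, hτmem N, ?_⟩
  intro τ hτ
  rcases eq_or_lt_of_le hτ.2 with rfl | hτlt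
  · rfl
  have hτI : τ ∈ Set.Icc t0 t1 := ⟨((hτmem N).1.trans hτ.1).le, hτ.2⟩
  -- choose n ≥ N with τ ≤ τs n
  obtain ⟨n0, hn0⟩ := exists_nat_ge (d / (t1 - τ))
  set n : ℕ := max n0 N with hndef
  have hτle : τ ≤ τs n := by
    have h1 : d / (t1 - τ) ≤ (n:ℝ) + 2 := by
      calc d / (t1 - τ) ≤ (n0:ℝ) := hn0
        _ ≤ (n:ℝ) + 2 := by
            have : (n0:ℝ) ≤ (n:ℝ) := Nat.cast_le.2 (le_max_left _ _)
            linarith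
    have h2 : d / ((n:ℝ) + 2) ≤ t1 - τ := by
      rw [div_le_iff₀ (hn2 n)]
      rw [div_le_iff₀ (sub_pos.2 hτlt)] at h1
      nlinarith [sub_pos.2 hτlt, hn2 n]
    simp only [hτsdef]; linarith
  apply Set.Subset.antisymm
  · rw [claim2, ← hSeq n (le_max_right _ _), hS n]
    exact reach_mono hAmeas hA hC hτI (hτIcc n) hτle
  · rw [claim2]
    intro x hx
    have hx' : x ∈ reach k m A t0 (τs N) := by rw [← hS N]; exact hx
    exact reach_mono hAmeas hA hC (hτIcc N) hτI hτ.1.le hx'
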